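/- Let I be a finite index set and {(x_i, g_i, f_i)}_{i∈I} a set of triples with x_i ∈ E, g_i ∈ E, f_i ∈ ℝ. There exists a proper closed convex function F : E → ℝ ∪ {+∞} with F(x_i) = f_i and g_i ∈ ∂F(x_i) for all i ∈ I if and only if f_i − f_j − ⟨g_j, x_i − x_j⟩ ≥ 0 holds for all i, j ∈ I. -/

import Mathlib

variable {E : Type*} [NormedAddCommGroup E] [InnerProductSpace ℝ E] [FiniteDimensional ℝ E]

/-- `f` is a proper, closed (lower semicontinuous) convex extended-real-valued function. -/
def IsProperClosedConvex (f : E → EReal) : Prop :=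
  (∃ x, f x ≠ ⊤) ∧ (∀ x, f x ≠ ⊥) ∧ LowerSemicontinuous f ∧
    ∀ x y : E, ∀ t : ℝ, 0 ≤ t → t ≤ 1 →
      f (t • x + (1 - t) • y) ≤ (t : EReal) * f x + ((1 - t : ℝ) : EReal) * f y

/-- `g` is a subgradient of `f` at `x`. -/
def IsSubgradientAt (f : E → EReal) (x g : E) : Prop :=
  ∀ y, f x + ((inner ℝ g (y - x) : ℝ) : EReal) ≤ f y

/-- Interpolation by a proper closed convex function is possible iff the
subgradient inequalities hold for all pairs of data points. -/
theorem stmt1 {ι : Type*} [Fintype ι] (x g : ι → E) (f : ι → ℝ) :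
    (∃ F : E → EReal, IsProperClosedConvex F ∧
        ∀ i, F (x i) = ((f i : ℝ) : EReal) ∧ IsSubgradientAt F (x i) (g i)) ↔
      ∀ i j, 0 ≤ f i - f j - (inner ℝ (g j) (x i - x j) : ℝ) := by
  constructor
  · rintro ⟨F, _, hF⟩ i j
    have h1 := (hF j).2 (x i)
    rw [(hF j).1, (hF i).1, ← EReal.coe_add, EReal.coe_le_coe_iff] at h1
    linarith
  · intro h
    rcases isEmpty_or_nonempty ι with hι | hι
    · refine ⟨fun _ => (0 : EReal), ⟨⟨0, by simp⟩, fun _ => by simp, ?_, ?_⟩,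
        fun i => (IsEmpty.false i).elim⟩
      · exact (continuous_const : Continuous fun _ : E => (0:EReal)).lowerSemicontinuous
      · intro a b t ht0 ht1
        rw [mul_zero, mul_zero, add_zero]
    · set F0 : E → ℝ := fun z => Finset.univ.sup' (Finset.univ_nonempty) fun j =>
        f j + inner ℝ (g j) (z - x j) with hF0
      have hterm : ∀ j z, f j + inner ℝ (g j) (z - x j) ≤ F0 z := fun j z =>
        Finset.le_sup' (fun j => f j + inner ℝ (g j) (z - x j)) (Finset.mem_univ j)
      have hFx : ∀ i, F0 (x i) = f i := by
        intro i
        apply le_antisymm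
        · apply Finset.sup'_le
          intro j _
          have := h i j
          linarith
        · have := hterm i (x i)
          simpa using this
      have hcont : Continuous F0 := by
        apply Continuous.finset_sup'_apply (f := fun j z => f j + inner ℝ (g j) (z - x j))
          Finset.univ_nonempty
        intro j _
        exact continuous_const.add (continuous_const.inner (continuous_id.sub continuous_const))
      refine ⟨fun z => ((F0 z : ℝ) : EReal), ⟨⟨0, by simp⟩, fun _ => by simp, ?_, ?_⟩, ?_⟩
      · exact (continuous_coe_real_ereal.comp hcont).lowerSemicontinuous
      · intro a b t ht0 ht1
        rw [← EReal.coe_mul, ← EReal.coe_mul, ← EReal.coe_add, EReal.coe_le_coe_iff]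
        apply Finset.sup'_le
        intro j _
        have ha := hterm j a
        have hb := hterm j b
        have key : f j + inner ℝ (g j) (t • a + (1 - t) • b - x j) =
            t * (f j + inner ℝ (g j) (a - x j)) + (1 - t) * (f j + inner ℝ (g j) (b - x j)) := by
          simp [inner_sub_right, inner_add_right, inner_smul_right]
          ring
        rw [key]
        have h1t : (0:ℝ) ≤ 1 - t := by linarith
        have := add_le_add (mul_le_mul_of_nonneg_left ha ht0)
          (mul_le_mul_of_nonneg_left hb h1t)
        linarith
      · intro i
        refine ⟨by simp only []; rw [hFx i], ?_⟩
        intro y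
        simp only []
        rw [hFx i, ← EReal.coe_add, EReal.coe_le_coe_iff]
        exact hterm i y
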